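/- Let q > 1, q' = 1, e_1 ≤ … ≤ e_W, U ∈ (e_1,e_W), and let p̃ be a maximizer of S_q over {p : p_i ≥ 0, ∑ p_i = 1, ∑ p_i e_i = U}. If p̃_i > 0 and p̃_k > 0 with i < j < k, then p̃_j > 0. In other words, the support of the optimizer is an interval of indices. -/

import Mathlib

open Finset

/-- Tsallis entropy `S_q(p) = k (∑ i, p_i^q − 1)/(1−q)` (real power). -/
noncomputable def tsallisEntropy (k q : ℝ) {ι : Type*} [Fintype ι] (p : ι → ℝ) : ℝ :=
  k * ((∑ i, p i ^ q) - 1) / (1 - q)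

/-- Bernoulli-type bound: for `0 < y`, `0 ≤ d`, `1 ≤ q`, `y ^ q + q * y ^ (q-1) * d ≤ (y+d) ^ q`. -/
lemma bern_aux {y d q : ℝ} (hy : 0 < y) (hd : 0 ≤ d) (hq : 1 ≤ q) :
    y ^ q + q * y ^ (q - 1) * d ≤ (y + d) ^ q := by
  have hs : (0:ℝ) ≤ d / y := div_nonneg hd hy.le
  have hb := one_add_mul_self_le_rpow_one_add (s := d / y) (by linarith) hq
  have hyd : y + d = y * (1 + d / y) := by field_simp
  have h1 : (y + d) ^ q = y ^ q * (1 + d / y) ^ q := by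
    rw [hyd, Real.mul_rpow hy.le (by linarith)]
  have h2 : y ^ q * (1 + q * (d / y)) ≤ y ^ q * (1 + d / y) ^ q :=
    mul_le_mul_of_nonneg_left hb (Real.rpow_nonneg hy.le q)
  have h3 : y ^ q * (1 + q * (d / y)) = y ^ q + q * (y ^ q / y) * d := by
    field_simp
  have h4 : y ^ q / y = y ^ (q - 1) := by
    rw [eq_comm, Real.rpow_sub hy, Real.rpow_one]
  rw [h1] at *
  calc y ^ q + q * y ^ (q - 1) * d = y ^ q * (1 + q * (d / y)) := by rw [h3, h4]
    _ ≤ _ := h2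

set_option maxHeartbeats 1600000 in
theorem support_interval_q_gt_one (W : ℕ) (hW : 2 ≤ W) (k q : ℝ)
    (hk : 0 < k) (hq : 1 < q)
    (e : Fin W → ℝ) (he : Monotone e)
    (hee : e ⟨0, by omega⟩ < e ⟨W - 1, by omega⟩)
    (U : ℝ) (hU : e ⟨0, by omega⟩ < U) (hU' : U < e ⟨W - 1, by omega⟩)
    (p : Fin W → ℝ)
    (hfeas : (∀ i, 0 ≤ p i) ∧ ∑ i, p i = 1 ∧ ∑ i, p i * e i = U)
    (hmax : ∀ p' : Fin W → ℝ,
      ((∀ i, 0 ≤ p' i) ∧ ∑ i, p' i = 1 ∧ ∑ i, p' i * e i = U) →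
        tsallisEntropy k q p' ≤ tsallisEntropy k q p)
    (i j l : Fin W) (hij : i < j) (hjl : j < l)
    (hpi : 0 < p i) (hpl : 0 < p l) :
    0 < p j := by
  by_contra hpj'
  obtain ⟨hnn, hsum1, hsumE⟩ := hfeas
  have hpj : p j = 0 := le_antisymm (not_lt.mp hpj') (hnn j)
  have hij' : i ≠ j := ne_of_lt hij
  have hjl' : j ≠ l := ne_of_lt hjl
  have hil : i ≠ l := ne_of_lt (hij.trans hjl)
  have heij : e i ≤ e j := he hij.le
  have hejl : e j ≤ e l := he hjl.le
  -- choose perturbation weights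
  obtain ⟨a, b, ha, hb, hab, hcons⟩ :
      ∃ a b : ℝ, 0 ≤ a ∧ 0 ≤ b ∧ 0 < a + b ∧ a * e i + b * e l = (a + b) * e j := by
    by_cases h : e i = e l
    · exact ⟨1, 1, by norm_num, by norm_num, by norm_num, by nlinarith⟩
    · have hlt : e i < e l := lt_of_le_of_ne (heij.trans hejl) h
      exact ⟨e l - e j, e j - e i, by linarith, by linarith, by linarith, by ring⟩
  set A := q * (p i / 2) ^ (q - 1) with hA_def
  set B := q * (p l / 2) ^ (q - 1) with hB_def
  have hA : 0 < A := mul_pos (by linarith) (Real.rpow_pos_of_pos (by linarith) _)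
  have hB : 0 < B := mul_pos (by linarith) (Real.rpow_pos_of_pos (by linarith) _)
  set c := a * A + b * B with hc_def
  have hc : 0 < c := by
    rcases lt_or_ge 0 a with h | h
    · have : 0 ≤ b * B := mul_nonneg hb hB.le
      nlinarith
    · have ha0 : a = 0 := le_antisymm h ha
      have hb0 : 0 < b := by linarith
      nlinarith
  set E := (a + b) ^ q with hE_def
  have hE : 0 < E := Real.rpow_pos_of_pos hab _
  set T3 := (c / (E + 1)) ^ (q - 1)⁻¹ with hT3_def
  have hT3 : 0 < T3 := Real.rpow_pos_of_pos (div_pos hc (by linarith)) _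
  set t := min (min (p i / (2 * (a + 1))) (p l / (2 * (b + 1)))) T3 with ht_def
  have ht : 0 < t := by
    apply lt_min (lt_min _ _) hT3 <;> positivity
  have hat : a * t ≤ p i / 2 := by
    have h1 : t ≤ p i / (2 * (a + 1)) := le_trans (min_le_left _ _) (min_le_left _ _)
    have h2 : t * (2 * (a + 1)) ≤ p i := by
      rw [← le_div_iff₀ (by positivity)]; exact h1
    nlinarith
  have hbt : b * t ≤ p l / 2 := by
    have h1 : t ≤ p l / (2 * (b + 1)) := le_trans (min_le_left _ _) (min_le_right _ _)
    have h2 : t * (2 * (b + 1)) ≤ p l := by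
      rw [← le_div_iff₀ (by positivity)]; exact h1
    nlinarith
  have htq : E * t ^ (q - 1) < c := by
    have h1 : t ≤ T3 := min_le_right _ _
    have h2 : t ^ (q - 1) ≤ T3 ^ (q - 1) :=
      Real.rpow_le_rpow ht.le h1 (by linarith)
    have h3 : T3 ^ (q - 1) = c / (E + 1) := by
      rw [hT3_def, Real.rpow_inv_rpow (div_pos hc (by linarith)).le
        (sub_ne_zero_of_ne (ne_of_gt hq))]
    have h4 : E * (c / (E + 1)) < c := by
      rw [← mul_div_assoc, div_lt_iff₀ (by linarith)]
      nlinarith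
    calc E * t ^ (q - 1) ≤ E * (c / (E + 1)) := by
          rw [← h3]; exact mul_le_mul_of_nonneg_left h2 hE.le
      _ < c := h4
  -- the perturbed distribution
  set p' : Fin W → ℝ := fun m =>
    if m = i then p i - a * t else if m = j then (a + b) * t
    else if m = l then p l - b * t else p m with hp'_def
  have hp'i : p' i = p i - a * t := by simp [hp'_def]
  have hp'j : p' j = (a + b) * t := by simp [hp'_def, hij'.symm]
  have hp'l : p' l = p l - b * t := by simp [hp'_def, hil.symm, hjl'.symm]
  have hp'other : ∀ m, m ≠ i → m ≠ j → m ≠ l → p' m = p m := by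
    intro m h1 h2 h3; simp [hp'_def, h1, h2, h3]
  -- generic sum-splitting helper
  have hkey : ∀ f g : Fin W → ℝ, (∀ m, m ≠ i → m ≠ j → m ≠ l → g m = f m) →
      ∑ m, g m = ∑ m, f m + (g i - f i) + (g j - f j) + (g l - f l) := by
    intro f g hfg
    have hpt : ∀ m, g m - f m =
        (if m = i then g i - f i else 0) + (if m = j then g j - f j else 0) +
          (if m = l then g l - f l else 0) := by
      intro m
      by_cases h1 : m = i
      · subst h1; rw [if_pos rfl, if_neg hij', if_neg hil]; ring
      · by_cases h2 : m = j
        · subst h2; rw [if_neg (Ne.symm hij'), if_pos rfl, if_neg hjl']; ring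
        · by_cases h3 : m = l
          · subst h3; rw [if_neg (Ne.symm hil), if_neg (Ne.symm hjl'), if_pos rfl]; ring
          · rw [if_neg h1, if_neg h2, if_neg h3, hfg m h1 h2 h3]; ring
    have h2 : ∑ m, (g m - f m) = (g i - f i) + (g j - f j) + (g l - f l) := by
      rw [Finset.sum_congr rfl fun m _ => hpt m, Finset.sum_add_distrib,
        Finset.sum_add_distrib]
      simp [Finset.sum_ite_eq']
    rw [Finset.sum_sub_distrib] at h2
    linarith
  -- feasibility of p'
  have hfeas' : (∀ m, 0 ≤ p' m) ∧ ∑ m, p' m = 1 ∧ ∑ m, p' m * e m = U := by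
    refine ⟨?_, ?_, ?_⟩
    · intro m
      by_cases h1 : m = i
      · subst h1; rw [hp'i]; linarith
      · by_cases h2 : m = j
        · subst h2; rw [hp'j]; positivity
        · by_cases h3 : m = l
          · subst h3; rw [hp'l]; linarith
          · rw [hp'other m h1 h2 h3]; exact hnn m
    · have := hkey p p' hp'other
      rw [hsum1, hp'i, hp'j, hp'l, hpj] at this
      rw [this]; ring
    · have := hkey (fun m => p m * e m) (fun m => p' m * e m)
        (fun m h1 h2 h3 => by rw [hp'other m h1 h2 h3])
      simp only [hsumE, hp'i, hp'j, hp'l, hpj] at this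
      rw [this]; linear_combination (-t) * hcons
  -- entropy sum comparison
  have hq1 : 0 ≤ q - 1 := by linarith
  have hpi2 : p i / 2 ≤ p i - a * t := by linarith
  have hpl2 : p l / 2 ≤ p l - b * t := by linarith
  have hbern_i : (p i - a * t) ^ q + A * (a * t) ≤ p i ^ q := by
    have h1 := bern_aux (y := p i - a * t) (d := a * t) (by linarith)
      (mul_nonneg ha ht.le) hq.le
    have h2 : (p i / 2) ^ (q - 1) ≤ (p i - a * t) ^ (q - 1) :=
      Real.rpow_le_rpow (by linarith) hpi2 hq1
    have h3 : A * (a * t) ≤ q * (p i - a * t) ^ (q - 1) * (a * t) := by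
      rw [hA_def]
      exact mul_le_mul_of_nonneg_right
        (mul_le_mul_of_nonneg_left h2 (by linarith : (0:ℝ) ≤ q)) (mul_nonneg ha ht.le)
    have h4 : p i - a * t + a * t = p i := by ring
    rw [h4] at h1; linarith
  have hbern_l : (p l - b * t) ^ q + B * (b * t) ≤ p l ^ q := by
    have h1 := bern_aux (y := p l - b * t) (d := b * t) (by linarith)
      (mul_nonneg hb ht.le) hq.le
    have h2 : (p l / 2) ^ (q - 1) ≤ (p l - b * t) ^ (q - 1) :=
      Real.rpow_le_rpow (by linarith) hpl2 hq1
    have h3 : B * (b * t) ≤ q * (p l - b * t) ^ (q - 1) * (b * t) := by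
      rw [hB_def]
      exact mul_le_mul_of_nonneg_right
        (mul_le_mul_of_nonneg_left h2 (by linarith : (0:ℝ) ≤ q)) (mul_nonneg hb ht.le)
    have h4 : p l - b * t + b * t = p l := by ring
    rw [h4] at h1; linarith
  have hj_pow : ((a + b) * t) ^ q < c * t := by
    have h1 : ((a + b) * t) ^ q = E * (t ^ (q - 1) * t) := by
      rw [Real.mul_rpow hab.le ht.le, hE_def]
      congr 1
      conv_lhs => rw [show q = (q - 1) + 1 by ring]
      rw [Real.rpow_add ht, Real.rpow_one]
    rw [h1, ← mul_assoc]
    exact mul_lt_mul_of_pos_right htq ht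
  have hpow_sum : ∑ m, p' m ^ q < ∑ m, p m ^ q := by
    have := hkey (fun m => p m ^ q) (fun m => p' m ^ q)
      (fun m h1 h2 h3 => by rw [hp'other m h1 h2 h3])
    simp only [hp'i, hp'j, hp'l, hpj] at this
    rw [Real.zero_rpow (by linarith : q ≠ 0)] at this
    rw [this]
    have : c * t = a * A * t + b * B * t := by rw [hc_def]; ring
    nlinarith
  -- contradiction with maximality
  have hcmp := hmax p' hfeas'
  unfold tsallisEntropy at hcmp
  have h1q : 1 - q < 0 := by linarith
  have hd : 0 < (k * ((∑ m, p' m ^ q) - 1) - k * ((∑ m, p m ^ q) - 1)) / (1 - q) := by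
    apply div_pos_of_neg_of_neg _ h1q
    nlinarith [hpow_sum]
  rw [sub_div] at hd
  linarith
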